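/- Let I be a set and F a filter on I that cannot be extended to an ω₁-complete (countably complete) ultrafilter. Then the abelian group A = ℤ^I / F has trivial dual: Hom(A, ℤ) = 0. -/

import Mathlib

universe u


open Classical in
theorem phi_congr (Φ : (ℕ → ℤ) →+ ℤ) (a : ℕ → ℤ) (K : ℕ) (M : ℤ)
    (h : ∀ n, K ≤ n → M ∣ a n) :
    ∃ z : ℤ, Φ a = (Finset.range K).sum (fun n => a n * Φ (Pi.single n 1)) + M * z := by
  set d : ℕ → ℤ := fun n => if K ≤ n then a n / M else 0 with hd
  refine ⟨Φ d, ?_⟩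
  have key : ∀ i, (Finset.range K).sum (fun n => a n * (Pi.single n 1 : ℕ → ℤ) i) =
      if i < K then a i else 0 := by
    intro i
    by_cases hi : i < K
    · rw [if_pos hi, Finset.sum_eq_single i]
      · simp
      · intro n _ hn; simp [Pi.single_apply, hn]
      · intro hni; exact absurd (Finset.mem_range.2 hi) hni
    · rw [if_neg hi, Finset.sum_eq_zero]
      intro n hn
      have : n ≠ i := by simp only [Finset.mem_range] at hn; omega
      simp [Pi.single_apply, this]
  have ha : a = (Finset.range K).sum (fun n => a n • Pi.single n (1:ℤ)) + M • d := by
    funext i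
    simp only [Pi.add_apply, Pi.smul_apply, Finset.sum_apply, hd, smul_eq_mul]
    rw [key i]
    by_cases hi : K ≤ i
    · rw [if_pos hi, if_neg (by omega)]
      rw [zero_add, Int.mul_ediv_cancel' (h i hi)]
    · rw [if_neg hi, if_pos (by omega), mul_zero, add_zero]
  calc Φ a = Φ ((Finset.range K).sum (fun n => a n • Pi.single n (1:ℤ)) + M • d) := by rw [← ha]
    _ = (Finset.range K).sum (fun n => a n * Φ (Pi.single n 1)) + M * Φ d := by
        rw [map_add, map_sum, AddMonoidHom.map_zsmul, smul_eq_mul]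
        congr 1
        refine Finset.sum_congr rfl fun n _ => ?_
        rw [AddMonoidHom.map_zsmul, smul_eq_mul]

/-- If `Φ` kills all unit vectors and all coordinates of `a` are divisible by `p^n`
(`2 ≤ p`), then `Φ a = 0`. -/
theorem phi_zero_of_pow_dvd (Φ : (ℕ → ℤ) →+ ℤ) (h0 : ∀ n, Φ (Pi.single n 1) = 0)
    (p : ℤ) (hp : 2 ≤ p) (a : ℕ → ℤ) (ha : ∀ n, p ^ n ∣ a n) : Φ a = 0 := by
  have key : ∀ K : ℕ, p ^ K ∣ Φ a := by
    intro K
    obtain ⟨z, hz⟩ := phi_congr Φ a K (p ^ K) (fun n hn => dvd_trans (pow_dvd_pow p hn) (ha n))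
    rw [hz, Finset.sum_eq_zero (fun n _ => by rw [h0 n, mul_zero]), zero_add]
    exact Dvd.intro z rfl
  by_contra hne
  obtain ⟨K, hK⟩ : ∃ K : ℕ, |Φ a| < p ^ K := by
    refine ⟨(Φ a).natAbs, ?_⟩
    calc |Φ a| = ((Φ a).natAbs : ℤ) := (Int.abs_eq_natAbs _)
      _ < 2 ^ (Φ a).natAbs := by exact_mod_cast Nat.lt_two_pow_self
      _ ≤ p ^ (Φ a).natAbs := pow_le_pow_left₀ (by norm_num) hp _
  exact hne (Int.eq_zero_of_abs_lt_dvd (key K) hK)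

/-- Specker: a homomorphism `ℤ^ℕ → ℤ` vanishing on all unit vectors is zero. -/
theorem specker (Φ : (ℕ → ℤ) →+ ℤ) (h0 : ∀ n, Φ (Pi.single n 1) = 0) (a : ℕ → ℤ) :
    Φ a = 0 := by
  have hcop : ∀ n : ℕ, IsCoprime ((2:ℤ) ^ n) ((3:ℤ) ^ n) := by
    intro n
    exact (Int.isCoprime_iff_gcd_eq_one.2 (by norm_num)).pow
  choose s t hst using fun n => (hcop n)
  set u : ℕ → ℤ := fun n => a n * (s n * 2 ^ n) with hu
  set v : ℕ → ℤ := fun n => a n * (t n * 3 ^ n) with hv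
  have hau : a = u + v := by
    funext n
    simp only [Pi.add_apply, hu, hv]
    calc a n = a n * (s n * 2 ^ n + t n * 3 ^ n) := by rw [hst n, mul_one]
      _ = a n * (s n * 2 ^ n) + a n * (t n * 3 ^ n) := by ring
  rw [hau, map_add, phi_zero_of_pow_dvd Φ h0 2 (by norm_num) u
      (fun n => ⟨a n * s n, by ring⟩),
    phi_zero_of_pow_dvd Φ h0 3 (by norm_num) v (fun n => ⟨a n * t n, by ring⟩), add_zero]

/-- A homomorphism `ℤ^ℕ → ℤ` cannot be nonzero on every unit vector. -/
theorem not_all_units_nonzero (Φ : (ℕ → ℤ) →+ ℤ) :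
    ¬ (∀ n, Φ (Pi.single n 1) ≠ 0) := by
  intro hx
  set x : ℕ → ℤ := fun n => Φ (Pi.single n 1) with hxdef
  -- rapidly increasing exponents
  set m : ℕ → ℕ := fun n => Nat.rec 0 (fun k mk => mk + (x k).natAbs + 1) n with hm
  have hms : ∀ n, m (n + 1) = m n + (x n).natAbs + 1 := fun n => rfl
  have hmono : Monotone m := monotone_nat_of_le_succ (fun n => by rw [hms]; omega)
  set a : (ℕ → Bool) → ℕ → ℤ := fun c n => if c n then 2 ^ (m n) else 0 with hadef
  have hcong : ∀ (c : ℕ → Bool) (K : ℕ), ∃ z : ℤ,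
      Φ (a c) = (Finset.range K).sum (fun n => a c n * x n) + 2 ^ (m K) * z := by
    intro c K
    refine phi_congr Φ (a c) K (2 ^ (m K)) (fun n hn => ?_)
    by_cases h : c n
    · simp only [hadef, if_pos h]
      exact pow_dvd_pow 2 (hmono hn)
    · simp [hadef, if_neg h]
  have hinj : Function.Injective (fun c => Φ (a c)) := by
    intro c c' h
    by_contra hne
    have hex : ∃ n, c n ≠ c' n := by
      by_contra hall
      push_neg at hall
      exact hne (funext hall)
    set n := Nat.find hex with hn
    have hcn : c n ≠ c' n := Nat.find_spec hex
    have hlt : ∀ j, j < n → c j = c' j := fun j hj => by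
      by_contra hj'; exact Nat.find_min hex hj hj'
    obtain ⟨z, hz⟩ := hcong c (n + 1)
    obtain ⟨z', hz'⟩ := hcong c' (n + 1)
    rw [Finset.sum_range_succ] at hz hz'
    have hsum : (Finset.range n).sum (fun j => a c j * x j) =
        (Finset.range n).sum (fun j => a c' j * x j) := by
      refine Finset.sum_congr rfl (fun j hj => ?_)
      rw [Finset.mem_range] at hj
      simp [hadef, hlt j hj]
    have hdvd : (2:ℤ) ^ (m (n + 1)) ∣ (a c n - a c' n) * x n := by
      refine ⟨z' - z, ?_⟩
      have := h
      simp only at this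
      rw [hz, hz'] at this
      rw [hsum] at this
      ring_nf
      ring_nf at this
      linarith
    have habs : |(a c n - a c' n) * x n| < 2 ^ (m (n + 1)) := by
      have h1 : |a c n - a c' n| = 2 ^ (m n) := by
        rcases Bool.eq_false_or_eq_true (c n) with h1 | h1 <;>
          rcases Bool.eq_false_or_eq_true (c' n) with h2 | h2 <;>
          simp [hadef, h1, h2, abs_of_nonneg, abs_of_nonpos] at hcn ⊢ <;>
          positivity
      rw [abs_mul, h1, hms]
      calc (2:ℤ) ^ (m n) * |x n| < 2 ^ (m n) * 2 ^ ((x n).natAbs + 1) := by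
            refine mul_lt_mul_of_pos_left ?_ (by positivity)
            calc |x n| = ((x n).natAbs : ℤ) := Int.abs_eq_natAbs _
              _ < 2 ^ (x n).natAbs := by exact_mod_cast Nat.lt_two_pow_self
              _ < 2 ^ ((x n).natAbs + 1) := by
                  exact_mod_cast Nat.pow_lt_pow_succ (by norm_num)
        _ = 2 ^ (m n + (x n).natAbs + 1) := by rw [← pow_add]; ring_nf
    have h0 := Int.eq_zero_of_abs_lt_dvd hdvd habs
    have hx0 : x n ≠ 0 := hx n
    have hne0 : a c n - a c' n ≠ 0 := by
      rcases Bool.eq_false_or_eq_true (c n) with h1 | h1 <;>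
        rcases Bool.eq_false_or_eq_true (c' n) with h2 | h2 <;>
        simp [hadef, h1, h2] at hcn ⊢ <;> positivity
    exact (mul_ne_zero hne0 hx0) h0
  -- Cantor diagonal: (ℕ → Bool) is uncountable, ℤ is countable
  have hcount : Countable (ℕ → Bool) := hinj.countable
  obtain ⟨f, hf⟩ := exists_surjective_nat (ℕ → Bool)
  obtain ⟨k, hk⟩ := hf (fun n => !(f n n))
  have := congrFun hk k
  simp at this

section NullSets

variable {I : Type u} (ψ : (I → ℤ) →+ ℤ)

/-- Sets `S` such that `ψ` kills every function supported inside `S`. -/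
def psiNull : Set (Set I) := {S | ∀ f : I → ℤ, (∀ i, i ∉ S → f i = 0) → ψ f = 0}

theorem psiNull_mono {S T : Set I} (hST : S ⊆ T) (hT : T ∈ psiNull ψ) : S ∈ psiNull ψ :=
  fun f hf => hT f (fun i hi => hf i (fun hiS => hi (hST hiS)))

theorem psiNull_empty : (∅ : Set I) ∈ psiNull ψ := by
  intro f hf
  have : f = 0 := funext fun i => hf i (Set.notMem_empty i)
  rw [this, map_zero]

open Classical in
theorem psiNull_iUnion (S : ℕ → Set I) (hS : ∀ n, S n ∈ psiNull ψ) :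
    (⋃ n, S n) ∈ psiNull ψ := by
  intro f hf
  set G : (ℕ → ℤ) →+ (I → ℤ) := AddMonoidHom.mk'
    (fun a => fun i => if h : ∃ n, i ∈ S n then a (Nat.find h) * f i else 0)
    (by
      intro a b
      funext i
      by_cases h : ∃ n, i ∈ S n
      · simp [h, add_mul]
      · simp [h]) with hG
  set Φ : (ℕ → ℤ) →+ ℤ := ψ.comp G with hPhi
  have h0 : ∀ n, Φ (Pi.single n 1) = 0 := by
    intro n
    refine hS n _ (fun i hi => ?_)
    simp only [hPhi, hG, AddMonoidHom.coe_comp, AddMonoidHom.mk'_apply, Function.comp_apply]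
    by_cases h : ∃ k, i ∈ S k
    · simp only [dif_pos h]
      have hfind : Nat.find h ≠ n := fun he => hi (he ▸ Nat.find_spec h)
      rw [Pi.single_apply, if_neg hfind, zero_mul]
    · simp [h]
  have hGone : G (fun _ => 1) = f := by
    funext i
    simp only [hG, AddMonoidHom.mk'_apply]
    by_cases h : ∃ n, i ∈ S n
    · simp [h]
    · have : i ∉ ⋃ n, S n := by
        simpa using fun n hn => h ⟨n, hn⟩
      simp [h, hf i this]
  have := specker Φ h0 (fun _ => 1)
  simpa [hPhi, hGone] using this

open Classical in
theorem psiNull_no_disjoint (A : ℕ → Set I)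
    (hd : ∀ m n, m ≠ n → Disjoint (A m) (A n))
    (h : ∀ n, A n ∉ psiNull ψ) : False := by
  have hex : ∀ n, ∃ f : I → ℤ, (∀ i, i ∉ A n → f i = 0) ∧ ψ f ≠ 0 := by
    intro n
    have := h n
    simp only [psiNull, Set.mem_setOf_eq, not_forall] at this
    obtain ⟨f, hf, hnz⟩ := this
    exact ⟨f, hf, hnz⟩
  choose f hsupp hnz using hex
  set G : (ℕ → ℤ) →+ (I → ℤ) := AddMonoidHom.mk'
    (fun a => fun i => if h : ∃ n, i ∈ A n then a (Nat.find h) * f (Nat.find h) i else 0)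
    (by
      intro a b
      funext i
      by_cases h : ∃ n, i ∈ A n
      · simp [h, add_mul]
      · simp [h]) with hG
  set Φ : (ℕ → ℤ) →+ ℤ := ψ.comp G with hPhi
  refine not_all_units_nonzero Φ (fun n => ?_)
  have hGn : G (Pi.single n 1) = f n := by
    funext i
    simp only [hG, AddMonoidHom.mk'_apply]
    by_cases h : ∃ k, i ∈ A k
    · rw [dif_pos h]
      by_cases hfn : Nat.find h = n
      · rw [hfn]; simp
      · rw [Pi.single_apply, if_neg hfn, zero_mul]
        have hik : i ∈ A (Nat.find h) := Nat.find_spec h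
        have : i ∉ A n := fun hin =>
          (hd _ _ hfn).ne_of_mem hik hin rfl
        exact (hsupp n i this).symm
    · rw [dif_neg h]
      have : i ∉ A n := fun hin => h ⟨n, hin⟩
      exact (hsupp n i this).symm
  simp only [hPhi, AddMonoidHom.coe_comp, Function.comp_apply, hGn]
  exact hnz n

end NullSets

section Atom
variable {I : Type u} (ψ : (I → ℤ) →+ ℤ)

theorem psiNull_union {S T : Set I} (hS : S ∈ psiNull ψ) (hT : T ∈ psiNull ψ) :
    S ∪ T ∈ psiNull ψ := by
  have : S ∪ T = ⋃ n : ℕ, (if n = 0 then S else T) := by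
    ext i
    simp only [Set.mem_union, Set.mem_iUnion]
    constructor
    · rintro (h | h)
      · exact ⟨0, by simpa using h⟩
      · exact ⟨1, by simpa using h⟩
    · rintro ⟨n, hn⟩
      by_cases h : n = 0
      · left; simpa [h] using hn
      · right; simpa [h] using hn
  rw [this]
  exact psiNull_iUnion ψ _ (fun n => by by_cases h : n = 0 <;> simp [h, hS, hT])

theorem psiNull_atom (hU : Set.univ ∉ psiNull ψ) :
    ∃ A : Set I, A ∉ psiNull ψ ∧ ∀ S : Set I, S ⊆ A → S ∈ psiNull ψ ∨ A \ S ∈ psiNull ψ := by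
  by_contra hna
  push_neg at hna
  have hstep : ∀ A : Set I, A ∉ psiNull ψ →
      ∃ S : Set I, S ⊆ A ∧ S ∉ psiNull ψ ∧ A \ S ∉ psiNull ψ := by
    intro A hA
    obtain ⟨S, hSA, hS1, hS2⟩ := hna A hA
    exact ⟨S, hSA, hS1, hS2⟩
  -- recursively split
  set T : ℕ → {A : Set I // A ∉ psiNull ψ} := fun n =>
    Nat.rec ⟨Set.univ, hU⟩
      (fun _ p => ⟨p.1 \ (hstep p.1 p.2).choose, (hstep p.1 p.2).choose_spec.2.2⟩) n with hT
  set A : ℕ → Set I := fun n => (hstep (T n).1 (T n).2).choose with hA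
  have hAnot : ∀ n, A n ∉ psiNull ψ := fun n => (hstep (T n).1 (T n).2).choose_spec.2.1
  have hAsub : ∀ n, A n ⊆ (T n).1 := fun n => (hstep (T n).1 (T n).2).choose_spec.1
  have hTsucc : ∀ n, (T (n + 1)).1 = (T n).1 \ A n := fun n => rfl
  have hTmono : ∀ m n, m ≤ n → (T n).1 ⊆ (T m).1 := by
    intro m n hmn
    induction n with
    | zero => have : m = 0 := Nat.le_zero.mp hmn; rw [this]
    | succ k ih =>
      rcases Nat.lt_or_ge m (k + 1) with h | h
      · refine subset_trans ?_ (ih (by omega))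
        rw [hTsucc]
        exact Set.diff_subset
      · have : m = k + 1 := by omega
        rw [this]
  have hdisj : ∀ m n, m ≠ n → Disjoint (A m) (A n) := by
    have key : ∀ m n, m < n → Disjoint (A m) (A n) := by
      intro m n hmn
      have h1 : A n ⊆ (T (m + 1)).1 := subset_trans (hAsub n) (hTmono (m + 1) n hmn)
      rw [hTsucc] at h1
      exact Set.disjoint_of_subset_right h1 (Set.disjoint_sdiff_right.mono_left le_rfl)
        |>.symm.symm
    intro m n hmn
    rcases Nat.lt_or_ge m n with h | h
    · exact key m n h
    · exact (key n m (by omega)).symm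
  exact psiNull_no_disjoint ψ A hdisj hAnot

end Atom

/-- The subgroup of `ℤ^I` of functions whose zero-set belongs to the filter `F`. -/
def zeroSetSubgroup {I : Type u} (F : Filter I) : AddSubgroup (I → ℤ) where
  carrier := {f | {i | f i = 0} ∈ F}
  zero_mem' := by simp
  add_mem' := by
    intro f g hf hg
    filter_upwards [hf, hg] with i h1 h2
    simp only [Pi.add_apply, Set.mem_setOf_eq] at *
    omega
  neg_mem' := by
    intro f hf
    filter_upwards [hf] with i h
    simp only [Pi.neg_apply, Set.mem_setOf_eq] at *
    omega

/-- If the filter `F` on `I` cannot be extended to a countably complete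
(`ω₁`-complete) ultrafilter, then the group `A = ℤ^I / F` has trivial dual. -/
theorem stmt11 {I : Type u} (F : Filter I)
    (hnoext : ¬ ∃ U : Ultrafilter I, (∀ s ∈ F, s ∈ U) ∧
      ∀ s : Set (Set I), s.Countable → (∀ t ∈ s, t ∈ U) → ⋂₀ s ∈ U) :
    ∀ φ : ((I → ℤ) ⧸ zeroSetSubgroup F) →+ ℤ, φ = 0 := by
  intro φ
  by_contra hφ
  set ψ : (I → ℤ) →+ ℤ := φ.comp (QuotientAddGroup.mk' (zeroSetSubgroup F)) with hψ
  -- ψ is not identically zero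
  have huniv : Set.univ ∉ psiNull ψ := by
    intro hnull
    apply hφ
    ext q
    have hz : ψ q = 0 := hnull q (fun i hi => absurd (Set.mem_univ i) hi)
    simpa [hψ] using hz
  -- complements of filter sets are null
  have hFnull : ∀ s ∈ F, sᶜ ∈ psiNull ψ := by
    intro s hs f hf
    have hmem : f ∈ zeroSetSubgroup F := by
      refine Filter.mem_of_superset hs (fun i hi => ?_)
      exact hf i (fun hic => hic hi)
    have : (QuotientAddGroup.mk' (zeroSetSubgroup F)) f = 0 :=
      (QuotientAddGroup.eq_zero_iff f).2 hmem
    simp only [QuotientAddGroup.mk'_apply] at this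
    simp only [hψ, AddMonoidHom.coe_comp, Function.comp_apply, QuotientAddGroup.mk'_apply]
    rw [this, map_zero]
  obtain ⟨A, hA, hatom⟩ := psiNull_atom ψ huniv
  -- the ultrafilter
  set Usets : Set (Set I) := {S | A \ S ∈ psiNull ψ} with hUsets
  set U : Filter I :=
    { sets := Usets
      univ_sets := by
        simp only [hUsets, Set.mem_setOf_eq, Set.diff_univ]
        exact psiNull_empty ψ
      sets_of_superset := by
        intro S T hS hST
        exact psiNull_mono ψ (Set.diff_subset_diff_right hST) hS
      inter_sets := by
        intro S T hS hT
        refine psiNull_mono ψ ?_ (psiNull_union ψ hS hT)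
        intro i hi
        simp only [Set.mem_diff, Set.mem_inter_iff, not_and_or] at hi
        rcases hi.2 with h | h
        · exact Or.inl ⟨hi.1, h⟩
        · exact Or.inr ⟨hi.1, h⟩ } with hUdef
  have hmemU : ∀ S : Set I, S ∈ U ↔ A \ S ∈ psiNull ψ := fun S => Iff.rfl
  have hcompl : ∀ S : Set I, Sᶜ ∉ U ↔ S ∈ U := by
    intro S
    constructor
    · intro h
      rcases hatom (A ∩ S) Set.inter_subset_left with hin | hout
      · exfalso
        apply h
        rw [hmemU]
        refine psiNull_mono ψ ?_ hin
        intro i hi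
        exact ⟨hi.1, not_not.mp hi.2⟩
      · rw [hmemU]
        refine psiNull_mono ψ ?_ hout
        intro i hi
        simp only [Set.mem_diff, Set.mem_inter_iff] at hi ⊢
        tauto
    · intro hS hSc
      rw [hmemU] at hS hSc
      apply hA
      refine psiNull_mono ψ ?_ (psiNull_union ψ hS hSc)
      intro i hi
      by_cases h : i ∈ S
      · exact Or.inr ⟨hi, fun hc => hc h⟩
      · exact Or.inl ⟨hi, h⟩
  set U' : Ultrafilter I := Ultrafilter.ofComplNotMemIff U hcompl with hU'
  have hmemU' : ∀ S : Set I, S ∈ U' ↔ A \ S ∈ psiNull ψ := fun S => Iff.rfl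
  apply hnoext
  refine ⟨U', ?_, ?_⟩
  · intro s hs
    rw [hmemU']
    exact psiNull_mono ψ (fun i hi => hi.2) (hFnull s hs)
  · intro s hcount hmem
    rcases s.eq_empty_or_nonempty with rfl | hne
    · simp only [Set.sInter_empty]
      rw [hmemU']
      simpa using psiNull_empty ψ
    · obtain ⟨e, rfl⟩ := hcount.exists_eq_range hne
      rw [hmemU']
      have : A \ ⋂₀ Set.range e = ⋃ n, (A \ e n) := by
        ext i
        simp only [Set.mem_diff, Set.mem_sInter, Set.mem_range, Set.mem_iUnion, not_forall]
        constructor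
        · rintro ⟨hiA, t, ⟨n, rfl⟩, hit⟩
          exact ⟨n, hiA, hit⟩
        · rintro ⟨n, hiA, hit⟩
          exact ⟨hiA, e n, ⟨n, rfl⟩, hit⟩
      rw [this]
      refine psiNull_iUnion ψ _ (fun n => ?_)
      have := hmem (e n) ⟨n, rfl⟩
      rwa [hmemU'] at this
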